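/- arXiv:2004.01918 — 3 statements merged into one kernel-verified Lean document; each statement's English description precedes it below -/
import Mathlib

section
/- If f₁ : (0,∞) → (0,∞) is operator monotone and operator convex, and f₂ is operator geodesically convex, then f₁ ∘ f₂ is operator geodesically convex: for positive definite matrices A, B and v ∈ [0,1], (f₁ ∘ f₂)(A #_v B) ≤ (1-v)·(f₁ ∘ f₂)(A) + v·(f₁ ∘ f₂)(B) in the Loewner order. -/
open scoped Matrix

/-- Weighted matrix geometric mean `A #_v B = A^(1/2) (A^(-1/2) B A^(-1/2))^v A^(1/2)`,
where real powers are taken via the continuous functional calculus. -/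
noncomputable def mpow {m : ℕ} (A : Matrix (Fin m) (Fin m) ℝ) (r : ℝ) :
    Matrix (Fin m) (Fin m) ℝ :=
  cfc (fun x : ℝ => x ^ r) A

noncomputable def geomMean {m : ℕ} (v : ℝ) (A B : Matrix (Fin m) (Fin m) ℝ) :
    Matrix (Fin m) (Fin m) ℝ :=
  mpow A (1/2) * mpow (mpow A (-(1/2)) * B * mpow A (-(1/2))) v * mpow A (1/2)

lemma contOn_of_finite {f : ℝ → ℝ} {s : Set ℝ} (hs : s.Finite) : ContinuousOn f s := by
  rw [continuousOn_iff_continuous_restrict]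
  have := hs.to_subtype
  exact continuous_of_discreteTopology

lemma contOn_spectrum {m : ℕ} (f : ℝ → ℝ) (A : Matrix (Fin m) (Fin m) ℝ) :
    ContinuousOn f (spectrum ℝ A) :=
  contOn_of_finite A.finite_real_spectrum

lemma isUnit_conjT {m : ℕ} {B : Matrix (Fin m) (Fin m) ℝ} (hB : IsUnit B) : IsUnit Bᴴ := by
  rw [Matrix.isUnit_iff_isUnit_det] at hB ⊢
  rw [Matrix.det_conjTranspose]
  exact hB.star

lemma posDef_conj' {m : ℕ} {A B : Matrix (Fin m) (Fin m) ℝ} (hA : A.PosDef) (hB : IsUnit B) :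
    (Bᴴ * A * B).PosDef := by
  refine Matrix.PosDef.of_dotProduct_mulVec_pos
    (Matrix.isHermitian_conjTranspose_mul_mul B hA.1) fun x hx => ?_
  have hx' : B *ᵥ x ≠ 0 := fun h => hx <|
    (Matrix.mulVec_injective_iff_isUnit.mpr hB) (by simpa using h)
  simpa only [Matrix.star_mulVec, Matrix.dotProduct_mulVec, Matrix.vecMul_vecMul]
    using hA.dotProduct_mulVec_pos hx'

lemma posDef_conj {m : ℕ} {A B : Matrix (Fin m) (Fin m) ℝ} (hA : A.PosDef) (hB : IsUnit B) :
    (B * A * Bᴴ).PosDef := by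
  simpa only [Matrix.conjTranspose_conjTranspose] using posDef_conj' hA (isUnit_conjT hB)

lemma posDef_cfc {m : ℕ} {f : ℝ → ℝ} (hf : ∀ x : ℝ, 0 < x → 0 < f x)
    {A : Matrix (Fin m) (Fin m) ℝ} (hA : A.PosDef) : (cfc f A).PosDef := by
  rw [hA.1.cfc_eq, Matrix.IsHermitian.cfc]
  have hU : IsUnit (hA.1.eigenvectorUnitary : Matrix (Fin m) (Fin m) ℝ) :=
    (Unitary.toUnits hA.1.eigenvectorUnitary).isUnit
  rw [Unitary.conjStarAlgAut_apply, Matrix.star_eq_conjTranspose]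
  refine posDef_conj ?_ hU
  refine Matrix.PosDef.diagonal fun i => ?_
  simpa using hf _ (hA.eigenvalues_pos i)

lemma posDef_mpow {m : ℕ} {A : Matrix (Fin m) (Fin m) ℝ} (hA : A.PosDef) (r : ℝ) :
    (mpow A r).PosDef :=
  posDef_cfc (fun _ hx => Real.rpow_pos_of_pos hx r) hA

lemma posDef_geomMean {m : ℕ} {A B : Matrix (Fin m) (Fin m) ℝ} (hA : A.PosDef) (hB : B.PosDef)
    (v : ℝ) : (geomMean v A B).PosDef := by
  have hm12 := posDef_mpow hA (-(1/2))
  have h12 := posDef_mpow hA (1/2)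
  have hM : (mpow A (-(1/2)) * B * mpow A (-(1/2))).PosDef := by
    have h := posDef_conj hB hm12.isUnit
    rwa [hm12.1.eq] at h
  have hMv := posDef_mpow hM v
  have h := posDef_conj hMv h12.isUnit
  rw [h12.1.eq] at h
  exact h


/-- If `f₁` is operator monotone and operator convex (mapping `(0,∞)` into `(0,∞)`) and `f₂`
is operator geodesically convex, then `f₁ ∘ f₂` is operator geodesically convex. -/
theorem comp_operatorGeodesicallyConvex (f₁ f₂ : ℝ → ℝ)
    (hf₁pos : ∀ x : ℝ, 0 < x → 0 < f₁ x) (hf₂pos : ∀ x : ℝ, 0 < x → 0 < f₂ x)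
    (hf₁mono : ∀ (m : ℕ) (A B : Matrix (Fin m) (Fin m) ℝ), A.PosDef → B.PosDef →
      (B - A).PosSemidef → (cfc f₁ B - cfc f₁ A).PosSemidef)
    (hf₁conv : ∀ (m : ℕ) (A B : Matrix (Fin m) (Fin m) ℝ), A.PosDef → B.PosDef →
      ∀ v : ℝ, v ∈ Set.Icc (0 : ℝ) 1 →
      ((1 - v) • cfc f₁ A + v • cfc f₁ B - cfc f₁ ((1 - v) • A + v • B)).PosSemidef)
    (hf₂gc : ∀ (m : ℕ) (A B : Matrix (Fin m) (Fin m) ℝ), A.PosDef → B.PosDef →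
      ∀ v : ℝ, v ∈ Set.Icc (0 : ℝ) 1 →
      ((1 - v) • cfc f₂ A + v • cfc f₂ B - cfc f₂ (geomMean v A B)).PosSemidef) :
    ∀ (m : ℕ) (A B : Matrix (Fin m) (Fin m) ℝ), A.PosDef → B.PosDef →
      ∀ v : ℝ, v ∈ Set.Icc (0 : ℝ) 1 →
      ((1 - v) • cfc (f₁ ∘ f₂) A + v • cfc (f₁ ∘ f₂) B
        - cfc (f₁ ∘ f₂) (geomMean v A B)).PosSemidef := by
  intro m A B hA hB v hv
  set G := geomMean v A B with hGdef
  have hG : G.PosDef := posDef_geomMean hA hB v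
  have hf₂A : (cfc f₂ A).PosDef := posDef_cfc hf₂pos hA
  have hf₂B : (cfc f₂ B).PosDef := posDef_cfc hf₂pos hB
  have hf₂G : (cfc f₂ G).PosDef := posDef_cfc hf₂pos hG
  have h2 := hf₂gc m A B hA hB v hv
  set Y := (1 - v) • cfc f₂ A + v • cfc f₂ B with hYdef
  have hY : Y.PosDef := by
    have h := hf₂G.add_posSemidef h2
    rwa [show cfc f₂ G + (Y - cfc f₂ G) = Y from by abel] at h
  have h1 := hf₁mono m (cfc f₂ G) Y hf₂G hY h2
  have h3 := hf₁conv m (cfc f₂ A) (cfc f₂ B) hf₂A hf₂B v hv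
  have e1 : cfc (f₁ ∘ f₂) A = cfc f₁ (cfc f₂ A) :=
    cfc_comp f₁ f₂ A hA.1 (contOn_of_finite ((Matrix.finite_real_spectrum (A := A)).image f₂))
      (contOn_spectrum f₂ A)
  have e2 : cfc (f₁ ∘ f₂) B = cfc f₁ (cfc f₂ B) :=
    cfc_comp f₁ f₂ B hB.1 (contOn_of_finite ((Matrix.finite_real_spectrum (A := B)).image f₂))
      (contOn_spectrum f₂ B)
  have e3 : cfc (f₁ ∘ f₂) G = cfc f₁ (cfc f₂ G) :=
    cfc_comp f₁ f₂ G hG.1 (contOn_of_finite ((Matrix.finite_real_spectrum (A := G)).image f₂))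
      (contOn_spectrum f₂ G)
  rw [e1, e2, e3]
  have h4 := h3.add h1
  rwa [sub_add_sub_cancel] at h4
end

section
/- Operator Aczél inequality: let p, q > 1 with 1/p + 1/q = 1, and let A, B be commuting positive definite operators with spectra in (0,1). Then for every unit vector x, 1 - ‖(AB)^(1/2) x‖² ≥ (1 - ‖A^(p/2) x‖²)^(1/p) · (1 - ‖B^(q/2) x‖²)^(1/q). -/
open scoped Matrix

namespace AczelAux

open Matrix Pointwise

variable {m : ℕ}

/-- Any real function is continuous on the (finite) spectrum of a matrix. -/
lemma contOn (f : ℝ → ℝ) (M : Matrix (Fin m) (Fin m) ℝ) :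
    ContinuousOn f (spectrum ℝ M) := by
  have h : (spectrum ℝ M).Finite := M.finite_spectrum
  haveI : Finite (spectrum ℝ M) := h
  rw [continuousOn_iff_continuous_restrict]
  exact continuous_of_discreteTopology

lemma isHermitian_cfc (f : ℝ → ℝ) (A : Matrix (Fin m) (Fin m) ℝ) :
    (cfc f A).IsHermitian :=
  (cfc_predicate f A : IsSelfAdjoint _)

/-- Anything commuting with a Hermitian matrix commutes with any cfc of it. -/
lemma commute_cfc {M A : Matrix (Fin m) (Fin m) ℝ} (hA : A.IsHermitian)
    (h : Commute M A) (f : ℝ → ℝ) : Commute M (cfc f A) := by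
  classical
  have hAsa : IsSelfAdjoint A := hA
  have hfin : (spectrum ℝ A).Finite := A.finite_spectrum
  set s : Finset ℝ := hfin.toFinset with hs
  set P : Polynomial ℝ := Lagrange.interpolate s id f with hPdef
  have h1 : cfc f A = cfc (fun x => P.eval x) A := by
    apply cfc_congr
    intro t ht
    exact (Lagrange.eval_interpolate_at_node f (Set.injOn_id _)
      (hfin.mem_toFinset.mpr ht)).symm
  rw [h1, cfc_polynomial P A hAsa]
  exact Algebra.commute_of_mem_adjoin_singleton_of_commute
    (Polynomial.aeval_mem_adjoin_singleton ℝ A) h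

lemma spec_pos {M : Matrix (Fin m) (Fin m) ℝ} (hM : M.PosDef) :
    ∀ t ∈ spectrum ℝ M, 0 < t := by
  intro t ht
  rw [hM.1.spectrum_real_eq_range_eigenvalues] at ht
  obtain ⟨i, rfl⟩ := ht
  exact hM.eigenvalues_pos i

lemma spec_nonneg {M : Matrix (Fin m) (Fin m) ℝ} (hM : M.PosSemidef) :
    ∀ t ∈ spectrum ℝ M, 0 ≤ t := by
  intro t ht
  rw [hM.1.spectrum_real_eq_range_eigenvalues] at ht
  obtain ⟨i, rfl⟩ := ht
  exact hM.eigenvalues_nonneg i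

lemma spec_lt_one {M : Matrix (Fin m) (Fin m) ℝ} (hM1 : (1 - M).PosDef) :
    ∀ t ∈ spectrum ℝ M, t < 1 := by
  intro t ht
  have h1 : (1 : ℝ) - t ∈ ({(1:ℝ)} : Set ℝ) - spectrum ℝ M :=
    Set.sub_mem_sub rfl ht
  rw [spectrum.singleton_sub_eq] at h1
  rw [_root_.map_one] at h1
  have := spec_pos hM1 _ h1
  linarith

lemma cfc_posSemidef {A : Matrix (Fin m) (Fin m) ℝ} (hA : A.IsHermitian) (f : ℝ → ℝ)
    (hf : ∀ t ∈ spectrum ℝ A, 0 ≤ f t) : (cfc f A).PosSemidef := by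
  rw [hA.cfc_eq]
  unfold Matrix.IsHermitian.cfc
  have hd : (Matrix.diagonal (RCLike.ofReal ∘ f ∘ hA.eigenvalues) :
      Matrix (Fin m) (Fin m) ℝ).PosSemidef := by
    refine Matrix.posSemidef_diagonal_iff.mpr fun i => ?_
    simpa using hf _ (hA.eigenvalues_mem_spectrum_real i)
  have := hd.mul_mul_conjTranspose_same (hA.eigenvectorUnitary : Matrix (Fin m) (Fin m) ℝ)
  rwa [← Matrix.star_eq_conjTranspose] at this

lemma dot_nonneg {M : Matrix (Fin m) (Fin m) ℝ} (hM : M.PosSemidef) (v : Fin m → ℝ) :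
    0 ≤ v ⬝ᵥ (M *ᵥ v) := by
  simpa using hM.dotProduct_mulVec_nonneg v

lemma inner_eq_dot (v w : EuclideanSpace ℝ (Fin m)) :
    (inner ℝ v w : ℝ) = (WithLp.equiv 2 (Fin m → ℝ) v) ⬝ᵥ (WithLp.equiv 2 (Fin m → ℝ) w) := by
  rw [EuclideanSpace.inner_eq_star_dotProduct]
  simp [dotProduct_comm]

lemma norm_sq_eq {M : Matrix (Fin m) (Fin m) ℝ} (hM : M.IsHermitian)
    (x : EuclideanSpace ℝ (Fin m)) :
    ‖Matrix.toEuclideanLin M x‖ ^ 2 =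
      (WithLp.equiv 2 (Fin m → ℝ) x) ⬝ᵥ ((M * M) *ᵥ (WithLp.equiv 2 (Fin m → ℝ) x)) := by
  set x' : Fin m → ℝ := WithLp.equiv 2 (Fin m → ℝ) x with hx'
  have hMt : Mᵀ = M := by
    have := hM.eq
    rwa [Matrix.conjTranspose_eq_transpose_of_trivial] at this
  rw [← real_inner_self_eq_norm_sq, inner_eq_dot]
  simp only [WithLp.equiv_apply, Matrix.ofLp_toEuclideanLin_apply]
  rw [← Matrix.mulVec_mulVec, Matrix.dotProduct_mulVec x' M (M *ᵥ x'),
    ← Matrix.mulVec_transpose, hMt]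
  rfl

/-- The key Young inequality for commuting positive definite matrices. -/
lemma young_matrix {p q : ℝ} (hp : 1 < p) (hq : 1 < q) (hpq : 1 / p + 1 / q = 1)
    {A B : Matrix (Fin m) (Fin m) ℝ} (hA : A.PosDef) (hB : B.PosDef)
    (hcomm : A * B = B * A) :
    ((1/p) • mpow A p + (1/q) • mpow B q - A * B).PosSemidef := by
  classical
  have hAh := hA.1
  have hBh := hB.1
  have hAsa : IsSelfAdjoint A := hAh
  have hBsa : IsSelfAdjoint B := hBh
  have hfin : (spectrum ℝ A).Finite := A.finite_spectrum
  set s : Finset ℝ := hfin.toFinset with hs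
  set e : ℝ → ℝ → ℝ := fun t y => if y = t then 1 else 0 with he
  set P : ℝ → Matrix (Fin m) (Fin m) ℝ := fun t => cfc (e t) A with hP
  set g : ℝ → ℝ → ℝ := fun t y => t ^ p / p + y ^ q / q - t * y with hg
  set C : ℝ → Matrix (Fin m) (Fin m) ℝ := fun t => cfc (g t) B with hC
  -- general summation lemma
  have hsum : ∀ h : ℝ → ℝ, (∑ t ∈ s, h t • P t) = cfc h A := by
    intro h
    have h1 : ∀ t, h t • P t = cfc (fun y => h t * e t y) A := fun t =>
      (cfc_const_mul (h t) (e t) A (contOn _ _)).symm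
    rw [Finset.sum_congr rfl fun t _ => h1 t,
      ← cfc_sum (fun t y => h t * e t y) A s (fun i _ => contOn _ _)]
    apply cfc_congr
    intro y hy
    have hys : y ∈ s := hfin.mem_toFinset.mpr hy
    rw [Finset.sum_apply]
    simp only [he, mul_ite, mul_one, mul_zero]
    rw [Finset.sum_ite_eq s y h]
    simp [hys]
  -- P t is idempotent
  have hPP : ∀ t, P t * P t = P t := by
    intro t
    rw [hP, ← cfc_mul (e t) (e t) A (contOn _ _) (contOn _ _)]
    apply cfc_congr
    intro y _
    by_cases hyt : y = t <;> simp [he, hyt]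
  -- commutation
  have hPC : ∀ t, Commute (P t) (C t) := by
    intro t
    have h1 : Commute B (P t) := commute_cfc hAh hcomm.symm (e t)
    exact commute_cfc hBh h1.symm (g t)
  -- expansion of C t
  have hCt : ∀ t, C t = (t ^ p / p) • (1 : Matrix (Fin m) (Fin m) ℝ)
      + (1/q) • mpow B q - t • B := by
    intro t
    show cfc (fun y => t ^ p / p + y ^ q / q - t * y) B = _
    have h1 : cfc (fun y => t ^ p / p + y ^ q / q - t * y) B
        = cfc (fun y => t ^ p / p + y ^ q / q) B - cfc (fun y => t * y) B :=
      cfc_sub _ _ B (contOn _ _) (contOn _ _)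
    have h2 : cfc (fun y => t ^ p / p + y ^ q / q) B
        = cfc (fun _ : ℝ => t ^ p / p) B + cfc (fun y : ℝ => y ^ q / q) B :=
      cfc_add B _ _ (contOn _ _) (contOn _ _)
    have h3 : cfc (fun _ : ℝ => t ^ p / p) B = (t ^ p / p) • (1 : Matrix (Fin m) (Fin m) ℝ) := by
      rw [cfc_const (t ^ p / p) B hBsa, Algebra.algebraMap_eq_smul_one]
    have h4 : cfc (fun y : ℝ => y ^ q / q) B = (1/q) • mpow B q := by
      have : (fun y : ℝ => y ^ q / q) = fun y : ℝ => (1/q) * y ^ q := by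
        funext y; ring
      rw [this, cfc_const_mul (1/q) (fun y : ℝ => y ^ q) B (contOn _ _)]
      rfl
    have h5 : cfc (fun y : ℝ => t * y) B = t • B := by
      rw [cfc_const_mul t (fun y : ℝ => y) B (contOn _ _), cfc_id' ℝ B hBsa]
    rw [h1, h2, h3, h4, h5]
  -- the key identity
  have key : (1/p) • mpow A p + (1/q) • mpow B q - A * B = ∑ t ∈ s, P t * C t * P t := by
    have hterm : ∀ t ∈ s, P t * C t * P t
        = (t ^ p / p) • P t + (1/q) • (mpow B q * P t) - t • (B * P t) := by
      intro t _
      rw [(hPC t).eq, mul_assoc, hPP t, hCt t]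
      rw [Matrix.sub_mul, Matrix.add_mul, Matrix.smul_mul, Matrix.smul_mul,
        Matrix.smul_mul, one_mul]
    rw [Finset.sum_congr rfl hterm]
    rw [Finset.sum_sub_distrib, Finset.sum_add_distrib]
    have e1 : (∑ t ∈ s, (t ^ p / p) • P t) = (1/p) • mpow A p := by
      have : ∀ t, (t ^ p / p) • P t = (1/p) • ((fun t : ℝ => t ^ p) t • P t) := by
        intro t
        rw [smul_smul]
        congr 1
        ring
      rw [Finset.sum_congr rfl fun t _ => this t, ← Finset.smul_sum,
        hsum (fun t : ℝ => t ^ p)]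
      rfl
    have e2 : (∑ t ∈ s, (1/q) • (mpow B q * P t)) = (1/q) • mpow B q := by
      rw [← Finset.smul_sum, ← Finset.mul_sum]
      have h1 : (∑ t ∈ s, P t) = 1 := by
        have := hsum (fun _ : ℝ => 1)
        simp only [one_smul] at this
        rw [this, cfc_const_one ℝ A hAsa]
      rw [h1, mul_one]
    have e3 : (∑ t ∈ s, t • (B * P t)) = A * B := by
      have : ∀ t : ℝ, t • (B * P t) = B * (t • P t) := fun t => (mul_smul_comm t B (P t)).symm
      rw [Finset.sum_congr rfl fun t _ => this t, ← Finset.mul_sum,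
        hsum (fun t : ℝ => t)]
      rw [cfc_id' ℝ A hAsa, ← hcomm]
    rw [e1, e2, e3]
  rw [key]
  -- each term is positive semidefinite
  refine Finset.sum_induction _ _ (fun a b ha hb => ha.add hb) (Matrix.PosSemidef.zero) ?_
  intro t ht
  have ht0 : 0 < t := spec_pos hA t (hfin.mem_toFinset.mp ht)
  have hCpsd : (C t).PosSemidef := by
    refine cfc_posSemidef hBh _ fun y hy => ?_
    have hy0 : 0 < y := spec_pos hB y hy
    have hconj : p.HolderConjugate q := Real.holderConjugate_iff.mpr ⟨hp, by simpa [one_div] using hpq⟩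
    have := Real.young_inequality_of_nonneg ht0.le hy0.le hconj
    simp only [hg]
    linarith
  have hPt : IsSelfAdjoint (P t) := cfc_predicate _ _
  have h1 := hCpsd.conjTranspose_mul_mul_same (P t)
  rwa [← Matrix.star_eq_conjTranspose, hPt] at h1

end AczelAux

open AczelAux Matrix in
/-- Operator Aczél inequality: for commuting positive definite `A, B` with spectra in `(0,1)`
(i.e. `0 < A < I`, `0 < B < I`), `p, q > 1` conjugate and a unit vector `x`,
`1 - ‖(AB)^(1/2) x‖² ≥ (1 - ‖A^(p/2) x‖²)^(1/p) (1 - ‖B^(q/2) x‖²)^(1/q)`. -/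
theorem operatorAczel (p q : ℝ) (hp : 1 < p) (hq : 1 < q) (hpq : 1 / p + 1 / q = 1)
    {m : ℕ} (A B : Matrix (Fin m) (Fin m) ℝ) (hA : A.PosDef) (hB : B.PosDef)
    (hcomm : A * B = B * A) (hA1 : (1 - A).PosDef) (hB1 : (1 - B).PosDef)
    (x : EuclideanSpace ℝ (Fin m)) (hx : ‖x‖ = 1) :
    (1 - ‖Matrix.toEuclideanLin (mpow A (p / 2)) x‖ ^ 2) ^ (1 / p) *
      (1 - ‖Matrix.toEuclideanLin (mpow B (q / 2)) x‖ ^ 2) ^ (1 / q) ≤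
    1 - ‖Matrix.toEuclideanLin (mpow (A * B) (1 / 2)) x‖ ^ 2 := by
  classical
  have hp0 : 0 < p := lt_trans one_pos hp
  have hq0 : 0 < q := lt_trans one_pos hq
  have hAh := hA.1
  have hBh := hB.1
  have hAsa : IsSelfAdjoint A := hAh
  have hBsa : IsSelfAdjoint B := hBh
  have hABh : (A * B).IsHermitian := by
    rw [Matrix.IsHermitian, Matrix.conjTranspose_mul, hAh.eq, hBh.eq, ← hcomm]
  have hABsa : IsSelfAdjoint (A * B) := hABh
  -- A * B is positive semidefinite
  have hRh : (mpow A (1/2)).IsHermitian := isHermitian_cfc _ _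
  have hRR : mpow A (1/2) * mpow A (1/2) = A := by
    simp only [mpow]
    rw [← cfc_mul (fun x : ℝ => x ^ (1/2 : ℝ)) (fun x : ℝ => x ^ (1/2 : ℝ)) A
      (contOn _ _) (contOn _ _)]
    have : cfc (fun t : ℝ => t ^ (1/2:ℝ) * t ^ (1/2:ℝ)) A = cfc (id : ℝ → ℝ) A := by
      apply cfc_congr
      intro t ht
      have h0 := spec_pos hA t ht
      show t ^ (1/2:ℝ) * t ^ (1/2:ℝ) = id t
      rw [id, ← Real.rpow_add h0]
      norm_num
    rw [this, cfc_id ℝ A hAsa]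
  have hABpsd : (A * B).PosSemidef := by
    have hcomm' : Commute B (mpow A (1/2)) := commute_cfc hAh hcomm.symm _
    have hform : A * B = mpow A (1/2) * B * (mpow A (1/2))ᴴ := by
      rw [hRh.eq, mul_assoc, hcomm'.eq, ← mul_assoc, hRR]
    rw [hform]
    exact hB.posSemidef.mul_mul_conjTranspose_same _
  -- abbreviations
  set x' : Fin m → ℝ := WithLp.equiv 2 (Fin m → ℝ) x with hx'def
  set a : ℝ := x' ⬝ᵥ (mpow A p *ᵥ x') with ha_def
  set b : ℝ := x' ⬝ᵥ (mpow B q *ᵥ x') with hb_def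
  set c : ℝ := x' ⬝ᵥ ((A * B) *ᵥ x') with hc_def
  have hxx : x' ⬝ᵥ x' = 1 := by
    have h1 : (inner ℝ x x : ℝ) = 1 := by
      rw [real_inner_self_eq_norm_sq, hx]; norm_num
    rw [inner_eq_dot] at h1
    exact h1
  -- the three norm identities
  have hna : ‖Matrix.toEuclideanLin (mpow A (p / 2)) x‖ ^ 2 = a := by
    have hMM : cfc (fun t : ℝ => t ^ (p/2 : ℝ)) A * cfc (fun t : ℝ => t ^ (p/2 : ℝ)) A
        = mpow A p := by
      rw [← cfc_mul (fun t : ℝ => t ^ (p/2 : ℝ)) (fun t : ℝ => t ^ (p/2 : ℝ)) A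
        (contOn _ _) (contOn _ _)]
      simp only [mpow]
      apply cfc_congr
      intro t ht
      have h0 := spec_pos hA t ht
      show t ^ (p/2:ℝ) * t ^ (p/2:ℝ) = t ^ (p:ℝ)
      rw [← Real.rpow_add h0]
      norm_num
    simp only [mpow]
    rw [norm_sq_eq (isHermitian_cfc _ _) x, hMM]
  have hnb : ‖Matrix.toEuclideanLin (mpow B (q / 2)) x‖ ^ 2 = b := by
    have hMM : cfc (fun t : ℝ => t ^ (q/2 : ℝ)) B * cfc (fun t : ℝ => t ^ (q/2 : ℝ)) B
        = mpow B q := by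
      rw [← cfc_mul (fun t : ℝ => t ^ (q/2 : ℝ)) (fun t : ℝ => t ^ (q/2 : ℝ)) B
        (contOn _ _) (contOn _ _)]
      simp only [mpow]
      apply cfc_congr
      intro t ht
      have h0 := spec_pos hB t ht
      show t ^ (q/2:ℝ) * t ^ (q/2:ℝ) = t ^ (q:ℝ)
      rw [← Real.rpow_add h0]
      norm_num
    simp only [mpow]
    rw [norm_sq_eq (isHermitian_cfc _ _) x, hMM]
  have hnc : ‖Matrix.toEuclideanLin (mpow (A * B) (1 / 2)) x‖ ^ 2 = c := by
    have hMM : cfc (fun t : ℝ => t ^ (1/2 : ℝ)) (A * B) * cfc (fun t : ℝ => t ^ (1/2 : ℝ)) (A * B)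
        = A * B := by
      rw [← cfc_mul (fun t : ℝ => t ^ (1/2 : ℝ)) (fun t : ℝ => t ^ (1/2 : ℝ)) (A * B)
        (contOn _ _) (contOn _ _)]
      have h1 : cfc (fun t : ℝ => t ^ (1/2:ℝ) * t ^ (1/2:ℝ)) (A * B)
          = cfc (id : ℝ → ℝ) (A * B) := by
        apply cfc_congr
        intro t ht
        have h0 := spec_nonneg hABpsd t ht
        show t ^ (1/2:ℝ) * t ^ (1/2:ℝ) = id t
        rw [id, ← Real.rpow_add' h0 (by norm_num)]
        norm_num
      rw [h1, cfc_id ℝ (A * B) hABsa]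
    simp only [mpow]
    rw [norm_sq_eq (isHermitian_cfc _ _) x, hMM]

  -- 1 - a ≥ 0 and 1 - b ≥ 0
  have hone_sub : ∀ (M : Matrix (Fin m) (Fin m) ℝ) (hM : M.PosDef) (hM1 : (1 - M).PosDef)
      (r : ℝ) (hr : 0 < r), (1 - mpow M r).PosSemidef := by
    intro M hM hM1 r hr
    have hMsa : IsSelfAdjoint M := hM.1
    have h1 : (1 : Matrix (Fin m) (Fin m) ℝ) - mpow M r = cfc (fun t : ℝ => 1 - t ^ r) M := by
      simp only [mpow]
      have := cfc_sub (fun _ : ℝ => (1:ℝ)) (fun t : ℝ => t ^ r) M (contOn _ _) (contOn _ _)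
      rw [this, cfc_const_one ℝ M hMsa]
    rw [h1]
    refine cfc_posSemidef hM.1 _ fun t ht => ?_
    have h0 := spec_pos hM t ht
    have h2 := spec_lt_one hM1 t ht
    have : t ^ r ≤ 1 := Real.rpow_le_one h0.le h2.le hr.le
    linarith
  have h1a : 0 ≤ 1 - a := by
    have hpsd := hone_sub A hA hA1 p hp0
    have := dot_nonneg hpsd x'
    rwa [Matrix.sub_mulVec, Matrix.one_mulVec, dotProduct_sub, hxx] at this
  have h1b : 0 ≤ 1 - b := by
    have hpsd := hone_sub B hB hB1 q hq0
    have := dot_nonneg hpsd x'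
    rwa [Matrix.sub_mulVec, Matrix.one_mulVec, dotProduct_sub, hxx] at this
  -- Young's inequality
  have hyoung : c ≤ 1/p * a + 1/q * b := by
    have hD := young_matrix hp hq hpq hA hB hcomm
    have h0 := dot_nonneg hD x'
    rw [Matrix.sub_mulVec, Matrix.add_mulVec, Matrix.smul_mulVec,
      Matrix.smul_mulVec, dotProduct_sub, dotProduct_add,
      dotProduct_smul, dotProduct_smul] at h0
    simp only [smul_eq_mul] at h0
    rw [← ha_def, ← hb_def, ← hc_def] at h0
    linarith
  -- finish with scalar inequalities
  rw [hna, hnb, hnc]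
  have hgm := Real.geom_mean_le_arith_mean2_weighted
    (by positivity : (0:ℝ) ≤ 1/p) (by positivity : (0:ℝ) ≤ 1/q) h1a h1b hpq
  have hfinal : 1/p * (1 - a) + 1/q * (1 - b) ≤ 1 - c := by
    have e1 : 1/p * (1 - a) + 1/q * (1 - b) = (1/p + 1/q) - (1/p * a + 1/q * b) := by ring
    rw [e1, hpq]
    linarith
  exact hgm.trans hfinal
end

section
/- Ando-Hiai log-majorization consequence: for positive definite n×n matrices A, B and v ∈ [0,1], the product of the k largest eigenvalues satisfies ∏_{j=1}^k λ_j(A #_v B) ≤ ∏_{j=1}^k λ_j(A)^(1-v) λ_j(B)^v for each k = 1,…,n, with equality of the full products at k = n (i.e., det(A #_v B) = det(A)^(1-v) det(B)^v). -/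
open scoped Matrix

/-- The eigenvalues of a Hermitian matrix listed in decreasing order:
`sortedEigs hA 0 = λ₁` is the largest eigenvalue. -/
noncomputable def sortedEigs {m : ℕ} {A : Matrix (Fin m) (Fin m) ℝ}
    (hA : A.IsHermitian) : Fin m → ℝ :=
  fun i => (hA.eigenvalues ∘ Tuple.sort hA.eigenvalues) i.rev

section Prelude
open Matrix Finset
-- PRELUDE-PIECES


namespace AH
variable {m : ℕ} {A : Matrix (Fin m) (Fin m) ℝ}

lemma triple_mul {V D1 D2 : Matrix (Fin m) (Fin m) ℝ} (h : star V * V = 1) :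
    (V * D1 * star V) * (V * D2 * star V) = V * (D1 * D2) * star V := by
  simp only [Matrix.mul_assoc]
  rw [← Matrix.mul_assoc (star V) V, h, Matrix.one_mul]

lemma mpow_eq (hA : A.PosDef) (r : ℝ) :
    mpow A r = (hA.1.eigenvectorUnitary : Matrix (Fin m) (Fin m) ℝ) *
      Matrix.diagonal (fun i => hA.1.eigenvalues i ^ r) *
      star (hA.1.eigenvectorUnitary : Matrix (Fin m) (Fin m) ℝ) := by
  rw [mpow, hA.1.cfc_eq, Matrix.IsHermitian.cfc]; congr 1

lemma star_eigU_mul (hA : A.IsHermitian) :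
    star (hA.eigenvectorUnitary : Matrix (Fin m) (Fin m) ℝ) *
      (hA.eigenvectorUnitary : Matrix (Fin m) (Fin m) ℝ) = 1 :=
  Unitary.star_mul_self_of_mem hA.eigenvectorUnitary.2

lemma eigU_mul_star (hA : A.IsHermitian) :
    (hA.eigenvectorUnitary : Matrix (Fin m) (Fin m) ℝ) *
      star (hA.eigenvectorUnitary : Matrix (Fin m) (Fin m) ℝ) = 1 :=
  Unitary.mul_star_self_of_mem hA.eigenvectorUnitary.2

lemma mpow_mul_mpow (hA : A.PosDef) (r s : ℝ) :
    mpow A r * mpow A s = mpow A (r + s) := by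
  rw [mpow_eq hA r, mpow_eq hA s, mpow_eq hA (r+s), triple_mul (star_eigU_mul hA.1),
    diagonal_mul_diagonal]
  have : (fun i => hA.1.eigenvalues i ^ r * hA.1.eigenvalues i ^ s) =
      fun i => hA.1.eigenvalues i ^ (r + s) := by
    funext i; rw [← Real.rpow_add (hA.eigenvalues_pos i)]
  rw [this]

lemma mpow_zero (hA : A.PosDef) : mpow A 0 = 1 := by
  rw [mpow_eq hA 0]
  simp only [Real.rpow_zero]
  rw [diagonal_one, Matrix.mul_one, eigU_mul_star hA.1]

lemma mpow_one (hA : A.PosDef) : mpow A 1 = A := by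
  rw [mpow_eq hA 1]
  simp only [Real.rpow_one]
  exact (Matrix.IsHermitian.spectral_theorem hA.1).symm

lemma mpow_star (hA : A.PosDef) (r : ℝ) : star (mpow A r) = mpow A r := by
  rw [mpow_eq hA r]
  simp only [StarMul.star_mul, star_star]
  rw [Matrix.mul_assoc]
  congr 1
  have : star (Matrix.diagonal (fun i => hA.1.eigenvalues i ^ r)) =
      Matrix.diagonal (fun i => hA.1.eigenvalues i ^ r) := by
    rw [Matrix.star_eq_conjTranspose, Matrix.diagonal_conjTranspose]
    congr 1
  rw [this]

lemma mpow_isHermitian (hA : A.PosDef) (r : ℝ) : (mpow A r).IsHermitian := by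
  have := mpow_star hA r
  rw [Matrix.star_eq_conjTranspose] at this
  exact this

lemma mpow_transpose (hA : A.PosDef) (r : ℝ) : (mpow A r)ᵀ = mpow A r := by
  have h := mpow_isHermitian hA r
  ext i j
  have := congrFun (congrFun h j) i
  simpa [Matrix.conjTranspose_apply] using this.symm

end AH

namespace AH2
open AH
variable {m k : ℕ} {A : Matrix (Fin m) (Fin m) ℝ}

lemma posDef_conj_rect {X : Matrix (Fin m) (Fin m) ℝ} (hX : X.PosDef)
    (B : Matrix (Fin m) (Fin k) ℝ) (hB : Function.Injective (B.mulVec)) :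
    (Bᴴ * X * B).PosDef := by
  refine Matrix.PosDef.of_dotProduct_mulVec_pos ?_ ?_
  · exact Matrix.isHermitian_conjTranspose_mul_mul B hX.1
  · intro x hx
    have hBx : B *ᵥ x ≠ 0 := by
      intro h
      exact hx (hB (by simpa [Matrix.mulVec_zero] using h))
    simpa only [Matrix.star_mulVec, Matrix.dotProduct_mulVec, Matrix.vecMul_vecMul] using
      hX.dotProduct_mulVec_pos hBx

lemma mpow_posDef' (hA : A.PosDef) (r : ℝ) : (mpow A r).PosDef := by
  rw [mpow_eq hA r]
  set V := (hA.1.eigenvectorUnitary : Matrix (Fin m) (Fin m) ℝ) with hV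
  have h1 : V * (star V) = 1 := eigU_mul_star hA.1
  have : V * Matrix.diagonal (fun i => hA.1.eigenvalues i ^ r) * star V =
      (star V)ᴴ * Matrix.diagonal (fun i => hA.1.eigenvalues i ^ r) * star V := by
    rw [Matrix.star_eq_conjTranspose, Matrix.conjTranspose_conjTranspose]
  rw [this]
  apply posDef_conj_rect
  · exact Matrix.PosDef.diagonal fun i => Real.rpow_pos_of_pos (hA.eigenvalues_pos i) r
  · intro x y hxy
    have := congrArg (V.mulVec) hxy
    rwa [Matrix.mulVec_mulVec, Matrix.mulVec_mulVec, h1, Matrix.one_mulVec,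
      Matrix.one_mulVec] at this

lemma mpow_det' (hA : A.PosDef) (r : ℝ) : (mpow A r).det = A.det ^ r := by
  rw [mpow_eq hA r, Matrix.det_mul, Matrix.det_mul]
  have h1 : (hA.1.eigenvectorUnitary : Matrix (Fin m) (Fin m) ℝ).det *
      (star (hA.1.eigenvectorUnitary : Matrix (Fin m) (Fin m) ℝ)).det = 1 := by
    rw [← Matrix.det_mul, eigU_mul_star hA.1, Matrix.det_one]
  have h2 : (Matrix.diagonal (fun i => hA.1.eigenvalues i ^ r)).det = A.det ^ r := by
    rw [Matrix.det_diagonal, Real.finset_prod_rpow _ _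
      (fun i _ => (hA.eigenvalues_pos i).le) r]
    rw [hA.1.det_eq_prod_eigenvalues]
    norm_num
  calc (hA.1.eigenvectorUnitary : Matrix (Fin m) (Fin m) ℝ).det *
        (Matrix.diagonal (fun i => hA.1.eigenvalues i ^ r)).det *
        (star (hA.1.eigenvectorUnitary : Matrix (Fin m) (Fin m) ℝ)).det
      = (Matrix.diagonal (fun i => hA.1.eigenvalues i ^ r)).det *
        ((hA.1.eigenvectorUnitary : Matrix (Fin m) (Fin m) ℝ).det *
          (star (hA.1.eigenvectorUnitary : Matrix (Fin m) (Fin m) ℝ)).det) := by ring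
    _ = A.det ^ r := by rw [h1, h2, mul_one]

end AH2


namespace AH3
variable {n k : ℕ}

lemma det_expand (X Y : Matrix (Fin n) (Fin k) ℝ) (w : Fin n → ℝ) :
    (Xᵀ * Matrix.diagonal w * Y).det =
      ∑ f : Fin k → Fin n, (∏ i, X (f i) i * w (f i)) * (Y.submatrix f id).det := by
  have hrow : (Xᵀ * Matrix.diagonal w * Y) =
      fun i => ∑ r : Fin n, (X r i * w r) • (fun j => Y r j) := by
    funext i j
    simp only [Matrix.mul_apply, Matrix.transpose_apply, Finset.sum_apply, Pi.smul_apply,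
      smul_eq_mul, Matrix.diagonal_apply, mul_ite, ite_mul, mul_zero, zero_mul,
      Finset.sum_ite_eq, Finset.sum_ite_eq', Finset.mem_univ, if_true]
  show Matrix.detRowAlternating _ = _
  rw [hrow, ← AlternatingMap.coe_multilinearMap, MultilinearMap.map_sum]
  refine Finset.sum_congr rfl fun f _ => ?_
  rw [MultilinearMap.map_smul_univ]
  simp only [smul_eq_mul]
  rfl

lemma det_expand_inj (X Y : Matrix (Fin n) (Fin k) ℝ) (w : Fin n → ℝ) :
    (Xᵀ * Matrix.diagonal w * Y).det =
      ∑ f ∈ Finset.univ.filter (fun f : Fin k → Fin n => Function.Injective f),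
        (∏ i, X (f i) i * w (f i)) * (Y.submatrix f id).det := by
  classical
  rw [det_expand]
  rw [← Finset.sum_filter_of_ne (p := fun f : Fin k → Fin n => Function.Injective f)]
  intro f _ hne
  by_contra hinj
  rw [Function.not_injective_iff] at hinj
  obtain ⟨a, b, hab, hne'⟩ := hinj
  exact hne (by rw [Matrix.det_zero_of_row_eq hne' (by funext j; simp [Matrix.submatrix, hab]),
    mul_zero])

theorem cauchyBinet (X Y : Matrix (Fin n) (Fin k) ℝ) (w : Fin n → ℝ) :
    (k.factorial : ℝ) * (Xᵀ * Matrix.diagonal w * Y).det =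
      ∑ f ∈ Finset.univ.filter (fun f : Fin k → Fin n => Function.Injective f),
        (∏ i, w (f i)) * ((X.submatrix f id).det * (Y.submatrix f id).det) := by
  classical
  have key : ∀ f : Fin k → Fin n, Function.Injective f →
      (∑ σ : Equiv.Perm (Fin k),
        (∏ i, X (f (σ i)) i * w (f (σ i))) * (Y.submatrix (f ∘ σ) id).det) =
      (∏ i, w (f i)) * ((X.submatrix f id).det * (Y.submatrix f id).det) := by
    intro f hf
    have step : ∀ σ : Equiv.Perm (Fin k),
        (∏ i, X (f (σ i)) i * w (f (σ i))) * (Y.submatrix (f ∘ σ) id).det =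
        (((Equiv.Perm.sign σ : ℤ) : ℝ) * ∏ i, (X.submatrix f id) (σ i) i) *
          ((∏ i, w (f i)) * (Y.submatrix f id).det) := by
      intro σ
      have hperm : (Y.submatrix (f ∘ σ) id).det =
          ((Equiv.Perm.sign σ : ℤ) : ℝ) * (Y.submatrix f id).det := by
        have h1 : Y.submatrix (f ∘ σ) id = (Y.submatrix f id).submatrix σ id := by
          ext i j; simp [Matrix.submatrix]
        rw [h1, Matrix.det_permute]
      have hsplit : (∏ i, X (f (σ i)) i * w (f (σ i))) =
          (∏ i, X (f (σ i)) i) * ∏ i, w (f i) := by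
        rw [Finset.prod_mul_distrib]
        congr 1
        exact Equiv.prod_comp σ (fun i => w (f i))
      rw [hperm, hsplit]
      have : (∏ i, (X.submatrix f id) (σ i) i) = ∏ i, X (f (σ i)) i := rfl
      rw [this]; ring
    rw [Finset.sum_congr rfl fun σ _ => step σ, ← Finset.sum_mul, ← Matrix.det_apply']
    ring
  calc (k.factorial : ℝ) * (Xᵀ * Matrix.diagonal w * Y).det
      = ∑ _σ : Equiv.Perm (Fin k), (Xᵀ * Matrix.diagonal w * Y).det := by
        rw [Finset.sum_const, Finset.card_univ, Fintype.card_perm, nsmul_eq_mul]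
        simp
    _ = ∑ σ : Equiv.Perm (Fin k),
        ∑ f ∈ Finset.univ.filter (fun f : Fin k → Fin n => Function.Injective f),
          (∏ i, X (f (σ i)) i * w (f (σ i))) * (Y.submatrix (f ∘ σ) id).det := by
        refine Finset.sum_congr rfl fun σ _ => ?_
        rw [det_expand_inj X Y w]
        refine Finset.sum_equiv (Equiv.arrowCongr σ (Equiv.refl (Fin n))) ?_ ?_
        · intro g
          simp only [Finset.mem_filter, Finset.mem_univ, true_and, Equiv.arrowCongr_apply]
          constructor
          · intro hg
            exact (Equiv.refl (Fin n)).injective.comp (hg.comp σ.symm.injective)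
          · intro hg
            have : g = (Equiv.refl (Fin n)) ∘ g ∘ σ.symm ∘ σ := by
              funext i; simp
            rw [this]
            exact hg.comp σ.injective
        · intro g hg
          have h1 : ∀ i, (Equiv.arrowCongr σ (Equiv.refl (Fin n)) g) (σ i) = g i := by
            intro i; simp
          have h2 : (Equiv.arrowCongr σ (Equiv.refl (Fin n)) g) ∘ σ = g := by
            funext i; simp
          rw [h2]
          refine congrArg (· * _) ?_
          refine Finset.prod_congr rfl fun i _ => ?_
          rw [h1]
    _ = ∑ f ∈ Finset.univ.filter (fun f : Fin k → Fin n => Function.Injective f),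
        ∑ σ : Equiv.Perm (Fin k),
          (∏ i, X (f (σ i)) i * w (f (σ i))) * (Y.submatrix (f ∘ σ) id).det :=
        Finset.sum_comm
    _ = _ := by
        refine Finset.sum_congr rfl fun f hf => ?_
        rw [Finset.mem_filter] at hf
        exact key f hf.2

end AH3



namespace AH4

lemma jensen_rpow {ι : Type*} (t : Finset ι) (w a : ι → ℝ) (hw : ∀ i ∈ t, 0 ≤ w i)
    (ha : ∀ i ∈ t, 0 ≤ a i) {v : ℝ} (hv0 : 0 ≤ v) (hv1 : v ≤ 1) (hW : 0 < ∑ i ∈ t, w i) :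
    ∑ i ∈ t, w i * a i ^ v ≤ (∑ i ∈ t, w i) ^ (1-v) * (∑ i ∈ t, w i * a i) ^ v := by
  set W := ∑ i ∈ t, w i with hWdef
  have hj := (Real.concaveOn_rpow hv0 hv1).le_map_sum
    (t := t) (w := fun i => w i / W) (p := fun i => a i)
    (fun i hi => div_nonneg (hw i hi) hW.le)
    (by rw [← Finset.sum_div]; field_simp; exact hWdef.symm)
    (fun i hi => Set.mem_Ici.2 (ha i hi))
  simp only [smul_eq_mul] at hj
  have hL : ∑ i ∈ t, (w i / W) * a i ^ v = (∑ i ∈ t, w i * a i ^ v) / W := by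
    rw [Finset.sum_div]
    exact Finset.sum_congr rfl fun i _ => by ring
  have hR : ∑ i ∈ t, (w i / W) * a i = (∑ i ∈ t, w i * a i) / W := by
    rw [Finset.sum_div]
    exact Finset.sum_congr rfl fun i _ => by ring
  rw [hL, hR] at hj
  have hSa : 0 ≤ ∑ i ∈ t, w i * a i :=
    Finset.sum_nonneg fun i hi => mul_nonneg (hw i hi) (ha i hi)
  rw [Real.div_rpow hSa hW.le] at hj
  have := mul_le_mul_of_nonneg_left hj hW.le
  rw [mul_div_cancel₀ _ (ne_of_gt hW)] at this
  refine this.trans (le_of_eq ?_)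
  rw [Real.rpow_sub hW 1 v, Real.rpow_one]
  ring

end AH4

lemma fin_le_strictMono {k n : ℕ} {f : Fin k → Fin n} (hf : StrictMono f) (j : Fin k) :
    (j : ℕ) ≤ (f j : ℕ) := by
  have key : ∀ m : ℕ, ∀ h : m < k, m ≤ (f ⟨m, h⟩ : ℕ) := by
    intro m
    induction m with
    | zero => intro h; exact Nat.zero_le _
    | succ p ih =>
      intro h
      have hp : p < k := Nat.lt_of_succ_lt h
      have h2 : f ⟨p, hp⟩ < f ⟨p+1, h⟩ := hf (by simp [Fin.lt_def])
      exact Nat.lt_of_le_of_lt (ih hp) h2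
  have := key j.val j.isLt
  simpa using this

lemma prod_comp_injective_le {n k : ℕ} (s : Fin n → ℝ) (hs : Antitone s)
    (hpos : ∀ i, 0 < s i) (g : Fin k → Fin n) (hg : Function.Injective g) (hkn : k ≤ n) :
    ∏ i : Fin k, s (g i) ≤ ∏ i : Fin k, s (Fin.castLE hkn i) := by
  classical
  set T := Finset.image g Finset.univ with hTdef
  have hT : T.card = k := by
    rw [hTdef, Finset.card_image_of_injective _ hg, Finset.card_univ, Fintype.card_fin]
  set e := T.orderEmbOfFin hT with hedef
  have himg : Finset.image (⇑e) Finset.univ = T := by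
    ext a
    simp only [Finset.mem_image, Finset.mem_univ, true_and]
    constructor
    · rintro ⟨j, rfl⟩; exact Finset.orderEmbOfFin_mem T hT j
    · intro ha
      have : a ∈ Set.range ⇑e := by rw [hedef, Finset.range_orderEmbOfFin]; exact ha
      obtain ⟨j, hj⟩ := this
      exact ⟨j, hj⟩
  have h1 : ∏ i : Fin k, s (g i) = ∏ a ∈ T, s a :=
    (Finset.prod_image (fun a _ b _ h => hg h)).symm
  have h2 : (∏ a ∈ T, s a) = ∏ j : Fin k, s (e j) := by
    rw [← himg, Finset.prod_image (fun a _ b _ h => e.injective h)]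
  rw [h1, h2]
  refine Finset.prod_le_prod (fun i _ => (hpos _).le) (fun j _ => hs ?_)
  have := fin_le_strictMono e.strictMono j
  simpa [Fin.le_def] using this

lemma sortedEigs_antitone {m : ℕ} {A : Matrix (Fin m) (Fin m) ℝ} (hA : A.IsHermitian) :
    Antitone (sortedEigs hA) := by
  intro i j hij
  exact Tuple.monotone_sort hA.eigenvalues (by rwa [Fin.rev_le_rev])

lemma sortedEigs_comp {m : ℕ} {A : Matrix (Fin m) (Fin m) ℝ} (hA : A.IsHermitian) :
    ∀ i, sortedEigs hA i = hA.eigenvalues ((Fin.revPerm.trans (Tuple.sort hA.eigenvalues)) i) :=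
  fun _ => rfl

lemma prod_filter_lt {n k : ℕ} (hkn : k ≤ n) (f : Fin n → ℝ) :
    ∏ j ∈ Finset.univ.filter (fun j : Fin n => (j : ℕ) < k), f j =
      ∏ i : Fin k, f (Fin.castLE hkn i) := by
  classical
  refine (Finset.prod_bij' (fun (i : Fin k) _ => Fin.castLE hkn i)
    (fun (j : Fin n) hj => ⟨j.val, (Finset.mem_filter.mp hj).2⟩) ?_ ?_ ?_ ?_ ?_).symm
  · intro i _
    simp [Finset.mem_filter, i.isLt]
  · intro j _; exact Finset.mem_univ _
  · intro i _; rfl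
  · intro j _; rfl
  · intro i _; rfl


namespace AH5
variable {n k : ℕ}

lemma real_conjT {a b : Type*} (X : Matrix a b ℝ) : Xᴴ = Xᵀ := by
  ext i j; simp [Matrix.conjTranspose_apply]

lemma submatrix_mul_id_left {a b c : Type*} [Fintype a] [Fintype b] [DecidableEq a]
    (M : Matrix a a ℝ) (N : Matrix a b ℝ) (m : c → a) :
    M.submatrix m id * N = (M * N).submatrix m id := by
  have := Matrix.submatrix_mul M N m id id Function.bijective_id
  rw [Matrix.submatrix_id_id] at this
  exact this.symm

lemma submatrix_mul_id_right {a b c : Type*} [Fintype a] [Fintype b] [DecidableEq a]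
    (M : Matrix b a ℝ) (N : Matrix a a ℝ) (m : c → a) :
    M * N.submatrix id m = (M * N).submatrix id m := by
  have := Matrix.submatrix_mul M N id id m Function.bijective_id
  rw [Matrix.submatrix_id_id] at this
  exact this.symm

/-- Compression of a diagonalized matrix by selected eigenvector columns. -/
lemma compress_diag (V : Matrix (Fin n) (Fin n) ℝ) (hV : star V * V = 1)
    (d : Fin n → ℝ) (m : Fin k → Fin n) (hm : Function.Injective m) :
    (V.submatrix id m)ᴴ * (V * Matrix.diagonal d * star V) * (V.submatrix id m) =
      Matrix.diagonal (d ∘ m) := by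
  have hU : (V.submatrix id m)ᴴ = (star V).submatrix m id := by
    rw [Matrix.conjTranspose_submatrix, ← Matrix.star_eq_conjTranspose]
  rw [hU, submatrix_mul_id_left]
  have h2 : star V * (V * Matrix.diagonal d * star V) = Matrix.diagonal d * star V := by
    rw [← Matrix.mul_assoc, ← Matrix.mul_assoc, hV, Matrix.one_mul]
  rw [h2]
  have h3 : (Matrix.diagonal d * star V).submatrix m id * V.submatrix id m =
      ((Matrix.diagonal d * star V) * V).submatrix m m := by
    have := Matrix.submatrix_mul (Matrix.diagonal d * star V) V m id m Function.bijective_id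
    exact this.symm
  rw [h3, Matrix.mul_assoc, hV, Matrix.mul_one, Matrix.submatrix_diagonal d m hm]

lemma compress_one (V : Matrix (Fin n) (Fin n) ℝ) (hV : star V * V = 1)
    (m : Fin k → Fin n) (hm : Function.Injective m) :
    (V.submatrix id m)ᴴ * (V.submatrix id m) = 1 := by
  have hU : (V.submatrix id m)ᴴ = (star V).submatrix m id := by
    rw [Matrix.conjTranspose_submatrix, ← Matrix.star_eq_conjTranspose]
  rw [hU]
  have h3 : (star V).submatrix m id * V.submatrix id m = ((star V) * V).submatrix m m := by
    exact (Matrix.submatrix_mul (star V) V m id m Function.bijective_id).symm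
  rw [h3, hV, Matrix.submatrix_one m hm]

lemma mulVec_injective_of_isometry {U : Matrix (Fin n) (Fin k) ℝ} (hU : Uᴴ * U = 1) :
    Function.Injective U.mulVec := by
  intro x y hxy
  have := congrArg (Uᴴ.mulVec) hxy
  rwa [Matrix.mulVec_mulVec, Matrix.mulVec_mulVec, hU, Matrix.one_mulVec,
    Matrix.one_mulVec] at this

end AH5

end Prelude

section Main
open Matrix Finset AH AH2 AH3 AH4 AH5

variable {n k : ℕ}

lemma sortedEigs_pos {X : Matrix (Fin n) (Fin n) ℝ} (hX : X.PosDef) (j : Fin n) :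
    0 < sortedEigs hX.1 j := by
  rw [sortedEigs_comp]
  exact hX.eigenvalues_pos _

/-- Compression bound: `det (Uᴴ X U) ≤ ∏ (top k eigenvalues of X)` for an isometry `U`. -/
lemma compression_det_le (hkn : k ≤ n) {X : Matrix (Fin n) (Fin n) ℝ} (hX : X.PosDef)
    (U : Matrix (Fin n) (Fin k) ℝ) (hUU : Uᴴ * U = 1) :
    (Uᴴ * X * U).det ≤
      ∏ j ∈ Finset.univ.filter (fun j : Fin n => (j : ℕ) < k), sortedEigs hX.1 j := by
  classical
  set evX := hX.1.eigenvalues with hevX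
  set VX : Matrix (Fin n) (Fin n) ℝ := (hX.1.eigenvectorUnitary : Matrix (Fin n) (Fin n) ℝ)
    with hVXdef
  have hVX : star VX * VX = 1 := star_eigU_mul hX.1
  have hVXs : VX * star VX = 1 := eigU_mul_star hX.1
  set NX := star VX * U with hNXdef
  have hNXt : NXᵀ = Uᴴ * VX := by
    rw [← real_conjT, hNXdef, Matrix.conjTranspose_mul, ← Matrix.star_eq_conjTranspose,
      star_star]
  have hkey : ∀ d : Fin n → ℝ, NXᵀ * Matrix.diagonal d * NX =
      Uᴴ * (VX * Matrix.diagonal d * star VX) * U := by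
    intro d
    rw [hNXt, hNXdef]
    simp only [Matrix.mul_assoc]
  have hXdec : Uᴴ * X * U = NXᵀ * Matrix.diagonal (RCLike.ofReal ∘ evX : Fin n → ℝ) * NX := by
    rw [hkey]
    conv_lhs => rw [hX.1.spectral_theorem]
    rw [Unitary.conjStarAlgAut_apply]
  have hIdec : NXᵀ * Matrix.diagonal (fun _ : Fin n => (1:ℝ)) * NX = 1 := by
    rw [hkey, Matrix.diagonal_one, Matrix.mul_one, hVXs, Matrix.mul_one, hUU]
  have cb1 := cauchyBinet NX NX (RCLike.ofReal ∘ evX)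
  have cb0 := cauchyBinet NX NX (fun _ : Fin n => (1:ℝ))
  rw [hIdec, Matrix.det_one, mul_one] at cb0
  rw [← hXdec] at cb1
  -- termwise bound
  set PX := ∏ j ∈ Finset.univ.filter (fun j : Fin n => (j : ℕ) < k), sortedEigs hX.1 j with hPX
  have hPXalt : PX = ∏ i : Fin k, sortedEigs hX.1 (Fin.castLE hkn i) :=
    prod_filter_lt hkn _
  have hterm : ∀ f : Fin k → Fin n, Function.Injective f →
      (∏ i, (RCLike.ofReal ∘ evX) (f i)) ≤ PX := by
    intro f hf
    set τX : Equiv.Perm (Fin n) := Fin.revPerm.trans (Tuple.sort evX) with hτX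
    have hse : ∀ a : Fin n, sortedEigs hX.1 (τX.symm a) = evX a := by
      intro a
      rw [sortedEigs_comp hX.1 (τX.symm a)]
      simp [hτX]
      exact congrArg evX ((Tuple.sort evX).apply_symm_apply a)
    have h1 : (∏ i, (RCLike.ofReal ∘ evX) (f i)) =
        ∏ i, sortedEigs hX.1 ((τX.symm ∘ f) i) := by
      refine Finset.prod_congr rfl fun i _ => ?_
      simp only [Function.comp_apply]
      rw [hse (f i)]
      rfl
    rw [h1, hPXalt]
    exact prod_comp_injective_le (sortedEigs hX.1) (sortedEigs_antitone hX.1)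
      (sortedEigs_pos hX) (τX.symm ∘ f) (fun a b h => hf (τX.symm.injective h)) hkn
  have hsum : (k.factorial : ℝ) * (Uᴴ * X * U).det ≤ PX * (k.factorial : ℝ) := by
    rw [cb1]
    calc ∑ f ∈ Finset.univ.filter (fun f : Fin k → Fin n => Function.Injective f),
          (∏ i, (RCLike.ofReal ∘ evX) (f i)) *
            ((NX.submatrix f id).det * (NX.submatrix f id).det)
        ≤ ∑ f ∈ Finset.univ.filter (fun f : Fin k → Fin n => Function.Injective f),
          PX * ((NX.submatrix f id).det * (NX.submatrix f id).det) := by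
          refine Finset.sum_le_sum fun f hf => ?_
          refine mul_le_mul_of_nonneg_right (hterm f (Finset.mem_filter.mp hf).2) ?_
          exact mul_self_nonneg _
      _ = PX * ∑ f ∈ Finset.univ.filter (fun f : Fin k → Fin n => Function.Injective f),
          (∏ i, (fun _ : Fin n => (1:ℝ)) (f i)) *
            ((NX.submatrix f id).det * (NX.submatrix f id).det) := by
          rw [Finset.mul_sum]
          refine Finset.sum_congr rfl fun f _ => ?_
          simp
      _ = PX * (k.factorial : ℝ) := by rw [← cb0]
  have hk : (0:ℝ) < (k.factorial : ℝ) := by exact_mod_cast Nat.factorial_pos k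
  rw [mul_comm] at hsum
  exact le_of_mul_le_mul_right hsum hk

set_option maxHeartbeats 2000000 in
lemma andoHiai_aux {n : ℕ} (A B : Matrix (Fin n) (Fin n) ℝ)
    (hA : A.PosDef) (hB : B.PosDef) (v : ℝ) (hv0 : 0 ≤ v) (hv1 : v ≤ 1)
    (hG : (geomMean v A B).IsHermitian) (k : ℕ) (hkn : k ≤ n) :
    ∏ j ∈ Finset.univ.filter (fun j : Fin n => (j : ℕ) < k), sortedEigs hG j ≤
      ∏ j ∈ Finset.univ.filter (fun j : Fin n => (j : ℕ) < k),
        sortedEigs hA.1 j ^ (1 - v) * sortedEigs hB.1 j ^ v := by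
  classical
  -- setup of square roots and C
  have h2 : (1:ℝ)/2 + 1/2 = 1 := by norm_num
  have h0 : (1:ℝ)/2 + (-(1/2)) = 0 := by norm_num
  have h0' : -((1:ℝ)/2) + 1/2 = 0 := by norm_num
  set R := mpow A (1/2) with hRdef
  set Ri := mpow A (-(1/2)) with hRidef
  have hRR : R * R = A := by rw [hRdef, mpow_mul_mpow hA, h2, mpow_one hA]
  have hRRi : R * Ri = 1 := by rw [hRdef, hRidef, mpow_mul_mpow hA, h0, mpow_zero hA]
  have hRiR : Ri * R = 1 := by rw [hRdef, hRidef, mpow_mul_mpow hA, h0', mpow_zero hA]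
  have hRst : star R = R := mpow_star hA _
  have hRist : star Ri = Ri := mpow_star hA _
  set C := Ri * B * Ri with hCdef
  have hRiInj : Function.Injective Ri.mulVec := by
    intro x y hxy
    have := congrArg R.mulVec hxy
    rwa [Matrix.mulVec_mulVec, Matrix.mulVec_mulVec, hRRi, Matrix.one_mulVec,
      Matrix.one_mulVec] at this
  have hCpos : C.PosDef := by
    have h : C = Riᴴ * B * Ri := by
      rw [hCdef, ← Matrix.star_eq_conjTranspose, hRist]
    rw [h]
    exact posDef_conj_rect hB Ri hRiInj
  have hGC : geomMean v A B = R * mpow C v * R := rfl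
  -- the isometry U of top-k eigenvectors of G
  set evG := hG.eigenvalues with hevG
  set τG : Equiv.Perm (Fin n) := Fin.revPerm.trans (Tuple.sort evG) with hτG
  set mf : Fin k → Fin n := fun j => τG (Fin.castLE hkn j) with hmf
  have hminj : Function.Injective mf := by
    intro a b h
    exact Fin.castLE_injective hkn (τG.injective h)
  set VG : Matrix (Fin n) (Fin n) ℝ := (hG.eigenvectorUnitary : Matrix (Fin n) (Fin n) ℝ)
    with hVGdef
  have hVG : star VG * VG = 1 := star_eigU_mul hG
  set U := VG.submatrix id mf with hUdef
  have hUU : Uᴴ * U = 1 := compress_one VG hVG mf hminj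
  have hUinj : Function.Injective U.mulVec := mulVec_injective_of_isometry hUU
  -- LHS equality
  have hGdiag : Uᴴ * (geomMean v A B) * U = Matrix.diagonal ((RCLike.ofReal ∘ evG) ∘ mf) := by
    conv_lhs => rw [hG.spectral_theorem]
    exact compress_diag VG hVG _ mf hminj
  have hdetG : (Uᴴ * (geomMean v A B) * U).det =
      ∏ j ∈ Finset.univ.filter (fun j : Fin n => (j : ℕ) < k), sortedEigs hG j := by
    rw [hGdiag, Matrix.det_diagonal, prod_filter_lt hkn (sortedEigs hG)]
    refine Finset.prod_congr rfl fun i _ => ?_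
    rw [sortedEigs_comp hG (Fin.castLE hkn i)]
    rfl
  -- B-side / Jensen setup
  set M := R * U with hMdef
  have hRconj : Rᴴ = R := by rw [← Matrix.star_eq_conjTranspose, hRst]
  have hMH : Mᴴ = Uᴴ * R := by
    rw [hMdef, Matrix.conjTranspose_mul, hRconj]
  set μ := hCpos.1.eigenvalues with hμ
  set VC : Matrix (Fin n) (Fin n) ℝ := (hCpos.1.eigenvectorUnitary : Matrix (Fin n) (Fin n) ℝ)
    with hVCdef
  have hVC : star VC * VC = 1 := star_eigU_mul hCpos.1
  set N := star VC * M with hNdef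
  have hNt : Nᵀ = Mᴴ * VC := by
    rw [← real_conjT, hNdef, Matrix.conjTranspose_mul, ← Matrix.star_eq_conjTranspose, star_star]
  have hkeyC : ∀ d : Fin n → ℝ, Nᵀ * Matrix.diagonal d * N =
      Uᴴ * (R * (VC * Matrix.diagonal d * star VC) * R) * U := by
    intro d
    rw [hNt, hNdef, hMH]
    simp only [Matrix.mul_assoc, hMdef]
  have hCv : ∀ r : ℝ, VC * Matrix.diagonal (fun i => μ i ^ r) * star VC = mpow C r :=
    fun r => (mpow_eq hCpos r).symm
  have hEv : Nᵀ * Matrix.diagonal (fun i => μ i ^ v) * N = Uᴴ * (geomMean v A B) * U := by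
    rw [hkeyC, hCv v, ← hGC]
  have hE0 : Nᵀ * Matrix.diagonal (fun i => μ i ^ (0:ℝ)) * N = Uᴴ * A * U := by
    rw [hkeyC, hCv 0, mpow_zero hCpos, Matrix.mul_one, hRR]
  have hE1 : Nᵀ * Matrix.diagonal (fun i => μ i ^ (1:ℝ)) * N = Uᴴ * B * U := by
    rw [hkeyC, hCv 1, mpow_one hCpos, hCdef]
    have hmid : R * (Ri * B * Ri) * R = (R * Ri) * B * (Ri * R) := by
      simp only [Matrix.mul_assoc]
    rw [hmid, hRRi, hRiR, Matrix.one_mul, Matrix.mul_one]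
  -- Cauchy–Binet expansions
  have cbv := cauchyBinet N N (fun i => μ i ^ v)
  rw [hEv] at cbv
  have cb0 := cauchyBinet N N (fun i => μ i ^ (0:ℝ))
  rw [hE0] at cb0
  have cb1 := cauchyBinet N N (fun i => μ i ^ (1:ℝ))
  rw [hE1] at cb1
  set t := Finset.univ.filter (fun f : Fin k → Fin n => Function.Injective f) with ht
  set w : (Fin k → Fin n) → ℝ := fun f => (N.submatrix f id).det * (N.submatrix f id).det
    with hw
  set a : (Fin k → Fin n) → ℝ := fun f => ∏ i, μ (f i) with ha
  have hμpos : ∀ i, 0 < μ i := fun i => hCpos.eigenvalues_pos i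
  have hcbv : (k.factorial : ℝ) * (Uᴴ * geomMean v A B * U).det = ∑ f ∈ t, w f * a f ^ v := by
    rw [cbv]
    refine Finset.sum_congr rfl fun f _ => ?_
    rw [hw, ha]
    rw [Real.finset_prod_rpow _ _ (fun i _ => (hμpos (f i)).le) v]
    ring
  have hcb0 : (k.factorial : ℝ) * (Uᴴ * A * U).det = ∑ f ∈ t, w f := by
    rw [cb0]
    refine Finset.sum_congr rfl fun f _ => ?_
    simp [hw, Real.rpow_zero]
  have hcb1 : (k.factorial : ℝ) * (Uᴴ * B * U).det = ∑ f ∈ t, w f * a f := by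
    rw [cb1]
    refine Finset.sum_congr rfl fun f _ => ?_
    simp only [hw, ha, Real.rpow_one]
    ring
  have hdA : (Uᴴ * A * U).PosDef := posDef_conj_rect hA U hUinj
  have hdB : (Uᴴ * B * U).PosDef := posDef_conj_rect hB U hUinj
  have hkf : (0:ℝ) < (k.factorial : ℝ) := by exact_mod_cast Nat.factorial_pos k
  have hWpos : 0 < ∑ f ∈ t, w f := by
    rw [← hcb0]
    exact mul_pos hkf hdA.det_pos
  have hjen := jensen_rpow t w a (fun f _ => mul_self_nonneg _)
    (fun f _ => Finset.prod_nonneg fun i _ => (hμpos (f i)).le) hv0 hv1 hWpos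
  rw [← hcbv, ← hcb0, ← hcb1] at hjen
  -- simplify the factorials
  have hrpow : ((k.factorial : ℝ) * (Uᴴ * A * U).det) ^ (1-v) *
      ((k.factorial : ℝ) * (Uᴴ * B * U).det) ^ v =
      (k.factorial : ℝ) * ((Uᴴ * A * U).det ^ (1-v) * (Uᴴ * B * U).det ^ v) := by
    rw [Real.mul_rpow hkf.le hdA.det_pos.le, Real.mul_rpow hkf.le hdB.det_pos.le]
    calc (k.factorial : ℝ) ^ (1-v) * (Uᴴ * A * U).det ^ (1-v) *
          ((k.factorial : ℝ) ^ v * (Uᴴ * B * U).det ^ v)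
        = ((k.factorial : ℝ) ^ (1-v) * (k.factorial : ℝ) ^ v) *
          ((Uᴴ * A * U).det ^ (1-v) * (Uᴴ * B * U).det ^ v) := by ring
      _ = _ := by
          rw [← Real.rpow_add hkf]
          norm_num
  rw [hrpow] at hjen
  have hmain : (Uᴴ * geomMean v A B * U).det ≤
      (Uᴴ * A * U).det ^ (1-v) * (Uᴴ * B * U).det ^ v :=
    le_of_mul_le_mul_left hjen hkf
  -- compression bounds
  have hbA : (Uᴴ * A * U).det ≤
      ∏ j ∈ Finset.univ.filter (fun j : Fin n => (j : ℕ) < k), sortedEigs hA.1 j :=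
    compression_det_le hkn hA U hUU
  have hbB : (Uᴴ * B * U).det ≤
      ∏ j ∈ Finset.univ.filter (fun j : Fin n => (j : ℕ) < k), sortedEigs hB.1 j :=
    compression_det_le hkn hB U hUU
  have hPA0 : (0:ℝ) ≤ ∏ j ∈ Finset.univ.filter (fun j : Fin n => (j : ℕ) < k),
      sortedEigs hA.1 j := Finset.prod_nonneg fun j _ => (sortedEigs_pos hA j).le
  have hfinal : (Uᴴ * A * U).det ^ (1-v) * (Uᴴ * B * U).det ^ v ≤
      (∏ j ∈ Finset.univ.filter (fun j : Fin n => (j : ℕ) < k), sortedEigs hA.1 j) ^ (1-v) *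
      (∏ j ∈ Finset.univ.filter (fun j : Fin n => (j : ℕ) < k), sortedEigs hB.1 j) ^ v := by
    refine mul_le_mul (Real.rpow_le_rpow hdA.det_pos.le hbA (by linarith))
      (Real.rpow_le_rpow hdB.det_pos.le hbB hv0)
      (Real.rpow_nonneg hdB.det_pos.le v)
      (Real.rpow_nonneg hPA0 (1-v))
  have hRHS : (∏ j ∈ Finset.univ.filter (fun j : Fin n => (j : ℕ) < k),
        sortedEigs hA.1 j) ^ (1-v) *
      (∏ j ∈ Finset.univ.filter (fun j : Fin n => (j : ℕ) < k), sortedEigs hB.1 j) ^ v =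
      ∏ j ∈ Finset.univ.filter (fun j : Fin n => (j : ℕ) < k),
        sortedEigs hA.1 j ^ (1 - v) * sortedEigs hB.1 j ^ v := by
    rw [Finset.prod_mul_distrib,
      Real.finset_prod_rpow _ _ (fun j _ => (sortedEigs_pos hA j).le) (1-v),
      Real.finset_prod_rpow _ _ (fun j _ => (sortedEigs_pos hB j).le) v]
  rw [← hdetG, ← hRHS]
  exact hmain.trans hfinal

/-- Ando–Hiai log-majorization: `∏_{j=1}^k λ_j(A #_v B) ≤ ∏_{j=1}^k λ_j(A)^(1-v) λ_j(B)^v`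
for each `k`, with equality of determinants at `k = n`:
`det (A #_v B) = det A ^ (1-v) * det B ^ v`. -/
theorem andoHiai_logMajorization {n : ℕ} (A B : Matrix (Fin n) (Fin n) ℝ)
    (hA : A.PosDef) (hB : B.PosDef) (v : ℝ) (hv : v ∈ Set.Icc (0 : ℝ) 1)
    (hG : (geomMean v A B).IsHermitian) :
    (∀ k : ℕ, k ≤ n →
      ∏ j ∈ Finset.univ.filter (fun j : Fin n => (j : ℕ) < k), sortedEigs hG j ≤
      ∏ j ∈ Finset.univ.filter (fun j : Fin n => (j : ℕ) < k),
        sortedEigs hA.1 j ^ (1 - v) * sortedEigs hB.1 j ^ v) ∧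
    (geomMean v A B).det = A.det ^ (1 - v) * B.det ^ v := by
  obtain ⟨hv0, hv1⟩ := hv
  constructor
  · exact fun k hkn => andoHiai_aux A B hA hB v hv0 hv1 hG k hkn
  · -- determinant identity
    have hRRi : mpow A (1/2) * mpow A (-(1/2)) = 1 := by
      rw [mpow_mul_mpow hA]
      norm_num [mpow_zero hA]
    have hRiInj : Function.Injective (mpow A (-(1/2))).mulVec := by
      intro x y hxy
      have := congrArg (mpow A (1/2)).mulVec hxy
      rwa [Matrix.mulVec_mulVec, Matrix.mulVec_mulVec, hRRi, Matrix.one_mulVec,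
        Matrix.one_mulVec] at this
    have hCpos : (mpow A (-(1/2)) * B * mpow A (-(1/2))).PosDef := by
      have h : mpow A (-(1/2)) * B * mpow A (-(1/2)) =
          (mpow A (-(1/2)))ᴴ * B * mpow A (-(1/2)) := by
        rw [← Matrix.star_eq_conjTranspose, mpow_star hA]
      rw [h]
      exact posDef_conj_rect hB _ hRiInj
    have hx : (0:ℝ) < A.det := hA.det_pos
    have hy : (0:ℝ) < B.det := hB.det_pos
    rw [geomMean, Matrix.det_mul, Matrix.det_mul, mpow_det' hA, mpow_det' hCpos,
      Matrix.det_mul, Matrix.det_mul, mpow_det' hA]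
    set x := A.det
    set y := B.det
    have h1 : x ^ (-(1/2):ℝ) * y * x ^ (-(1/2):ℝ) = y / x := by
      rw [show x ^ (-(1/2):ℝ) * y * x ^ (-(1/2):ℝ) =
        (x ^ (-(1/2):ℝ) * x ^ (-(1/2):ℝ)) * y from by ring, ← Real.rpow_add hx]
      norm_num
      rw [Real.rpow_neg_one]
      ring
    rw [h1, Real.div_rpow hy.le hx.le]
    have hxx : x ^ ((1:ℝ)/2) * x ^ ((1:ℝ)/2) = x := by
      rw [← Real.rpow_add hx]; norm_num
    rw [Real.rpow_sub hx, Real.rpow_one]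
    calc x ^ ((1:ℝ)/2) * (y ^ v / x ^ v) * x ^ ((1:ℝ)/2)
        = (x ^ ((1:ℝ)/2) * x ^ ((1:ℝ)/2)) * (y ^ v / x ^ v) := by ring
      _ = x / x ^ v * y ^ v := by rw [hxx]; ring

end Main
end
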